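/- Let λ_1 ≥ λ_2 ≥ ... ≥ λ_n ≥ 0 be real numbers and let D = diag(λ_1, λ_2, ..., λ_n). Let U_k = (u_1, ..., u_k) be an n×k complex matrix with orthonormal columns, i.e., U_k* U_k = I_k, and suppose m ≥ 1 is such that the first column u_1 has zero entries in all positions i > m. Let D_m = diag(λ_m, ..., λ_m, λ_{m+1}, ..., λ_n) be the diagonal matrix whose first m diagonal entries equal λ_m and whose remaining diagonal entries are λ_{m+1}, ..., λ_n, and let V = (u_2, ..., u_k) be the n×(k−1) matrix formed by the last k−1 columns of U_k. Then det(U_k* D U_k) ≥ λ_m · det(V* D_m V). -/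

import Mathlib

open Matrix
open scoped ComplexOrder

variable {ν : Type*} [Fintype ν] [DecidableEq ν]

lemma eig_ge_one {M : Matrix ν ν ℂ} (hM : M.IsHermitian) (h : (M - 1).PosSemidef) (i : ν) :
    1 ≤ hM.eigenvalues i := by
  have hv := h.re_dotProduct_nonneg ⇑(hM.eigenvectorBasis i)
  have h1 : (inner ℂ (hM.eigenvectorBasis i) (hM.eigenvectorBasis i) : ℂ) = 1 := by
    rw [inner_self_eq_norm_sq_to_K, hM.eigenvectorBasis.orthonormal.1 i]; norm_num
  have hnorm : star ((hM.eigenvectorBasis i).ofLp) ⬝ᵥ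
      (hM.eigenvectorBasis i).ofLp = 1 := by
    rw [dotProduct_comm, ← EuclideanSpace.inner_eq_star_dotProduct]; exact h1
  rw [sub_mulVec, one_mulVec, dotProduct_sub] at hv
  simp only [map_sub, sub_nonneg] at hv
  have h2 : (1:ℝ) ≤ RCLike.re (star ((hM.eigenvectorBasis i).ofLp) ⬝ᵥ
      M *ᵥ (hM.eigenvectorBasis i).ofLp) := by
    refine le_trans ?_ hv
    rw [hnorm]; norm_num
  rw [hM.eigenvalues_eq i]
  exact h2

lemma psd_det_eq {A : Matrix ν ν ℂ} (hA : A.PosSemidef) :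
    A.det = ((∏ i, hA.1.eigenvalues i : ℝ) : ℂ) := by
  rw [hA.1.det_eq_prod_eigenvalues]; push_cast; rfl

lemma psd_det_re_nonneg {A : Matrix ν ν ℂ} (hA : A.PosSemidef) : 0 ≤ A.det.re := by
  rw [psd_det_eq hA, Complex.ofReal_re]
  exact Finset.prod_nonneg fun i _ => hA.eigenvalues_nonneg i

open scoped MatrixOrder in
lemma det_re_le_det_re {A B : Matrix ν ν ℂ} (hB : B.PosSemidef)
    (hAB : (A - B).PosSemidef) : B.det.re ≤ A.det.re := by
  have hA : A.PosSemidef := by simpa using hAB.add hB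
  by_cases hdet : B.det = 0
  · rw [hdet]
    simpa using psd_det_re_nonneg hA
  · set S := CFC.sqrt B with hSdef
    have hS : S.PosSemidef := (CFC.sqrt_nonneg B).posSemidef
    have hSS : S * S = B := CFC.sqrt_mul_sqrt_self B hB.nonneg
    have hSdet : IsUnit S.det := by
      rw [isUnit_iff_ne_zero]
      intro h0
      apply hdet
      rw [← hSS, det_mul, h0, zero_mul]
    have hSinv : S⁻¹ᴴ = S⁻¹ := by rw [conjTranspose_nonsing_inv, hS.1]
    set M := S⁻¹ * A * S⁻¹ with hMdef
    have hM : M.PosSemidef := by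
      have := hA.conjTranspose_mul_mul_same S⁻¹
      rwa [hSinv] at this
    have hone : S⁻¹ * B * S⁻¹ = 1 := by
      rw [← hSS, ← Matrix.mul_assoc, Matrix.nonsing_inv_mul S hSdet, Matrix.one_mul,
        Matrix.mul_nonsing_inv S hSdet]
    have hM1 : (M - 1).PosSemidef := by
      have heq : M - 1 = S⁻¹ᴴ * (A - B) * S⁻¹ := by
        rw [hSinv, Matrix.mul_sub, Matrix.sub_mul, hone, hMdef]
      rw [heq]
      exact hAB.conjTranspose_mul_mul_same S⁻¹
    have hAeq : A = S * M * S := by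
      rw [hMdef, ← Matrix.mul_assoc, ← Matrix.mul_assoc,
        Matrix.mul_nonsing_inv S hSdet, Matrix.one_mul, Matrix.mul_assoc,
        Matrix.nonsing_inv_mul S hSdet, Matrix.mul_one]
    have hSB : S.det * S.det = B.det := by rw [← Matrix.det_mul, hSS]
    have hdetA : A.det = B.det * M.det := by
      rw [hAeq, Matrix.det_mul, Matrix.det_mul, ← hSB]; ring
    have hMprod : M.det = ((∏ i, hM.1.eigenvalues i : ℝ) : ℂ) := psd_det_eq hM
    have hBprod : B.det = ((∏ i, hB.1.eigenvalues i : ℝ) : ℂ) := psd_det_eq hB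
    have hMge : (1:ℝ) ≤ ∏ i, hM.1.eigenvalues i := by
      calc (1:ℝ) = ∏ _i : ν, (1:ℝ) := by simp
      _ ≤ ∏ i, hM.1.eigenvalues i :=
        Finset.prod_le_prod (fun i _ => zero_le_one) (fun i _ => eig_ge_one hM.1 hM1 i)
    have hBpos : 0 ≤ ∏ i, hB.1.eigenvalues i :=
      Finset.prod_nonneg fun i _ => hB.eigenvalues_nonneg i
    rw [hdetA, hBprod, hMprod, ← Complex.ofReal_mul, Complex.ofReal_re, Complex.ofReal_re]
    nlinarith

theorem det_partial_isometry_diag_ge (n k m : ℕ) (hk : 0 < k) (hm : 1 ≤ m) (hmn : m ≤ n)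
    (l : Fin n → ℝ) (hl : Antitone l) (hl0 : ∀ i, 0 ≤ l i)
    (U : Matrix (Fin n) (Fin k) ℂ) (hU : Uᴴ * U = 1)
    (hcol : ∀ i : Fin n, m ≤ (i : ℕ) → U i ⟨0, hk⟩ = 0)
    (D Dm : Matrix (Fin n) (Fin n) ℂ) (V : Matrix (Fin n) (Fin (k - 1)) ℂ)
    (hD : D = Matrix.diagonal fun i => (l i : ℂ))
    (hDm : Dm = Matrix.diagonal fun i : Fin n =>
      if (i : ℕ) < m then (l ⟨m - 1, by omega⟩ : ℂ) else (l i : ℂ))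
    (hV : ∀ (i : Fin n) (j : Fin (k - 1)), V i j = U i ⟨(j : ℕ) + 1, by omega⟩) :
    ((Uᴴ * D * U).det).re ≥ l ⟨m - 1, by omega⟩ * ((Vᴴ * Dm * V).det).re := by
  set lam : ℝ := l ⟨m - 1, by omega⟩ with hlam
  set d : Fin n → ℂ := fun i : Fin n => if (i : ℕ) < m then (lam : ℂ) else (l i : ℂ) with hd
  have hlam0 : 0 ≤ lam := hl0 _
  -- Dm is PSD
  have hDmpsd : Dm.PosSemidef := by
    rw [hDm]
    refine PosSemidef.diagonal fun i => ?_
    simp only [hd, Pi.zero_apply]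
    split <;> exact Complex.zero_le_real.2 (hl0 _)
  have hBpsd : (Uᴴ * Dm * U).PosSemidef := hDmpsd.conjTranspose_mul_mul_same U
  -- D - Dm is PSD, hence A - B PSD
  have hDDm : (D - Dm).PosSemidef := by
    rw [hD, hDm, diagonal_sub]
    refine PosSemidef.diagonal fun i => ?_
    simp only [hd, Pi.zero_apply]
    split
    · next hi =>
      rw [← Complex.ofReal_sub]
      refine Complex.zero_le_real.2 ?_
      have : (⟨m - 1, by omega⟩ : Fin n) ≤ i ∨ i ≤ ⟨m - 1, by omega⟩ := le_total _ _
      have hle : i ≤ (⟨m - 1, by omega⟩ : Fin n) := by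
        rw [Fin.le_def]; simpa using by omega
      linarith [hl hle]
    · simp
  have hsub : (Uᴴ * D * U - Uᴴ * Dm * U).PosSemidef := by
    have h1 : Uᴴ * D * U - Uᴴ * Dm * U = Uᴴ * (D - Dm) * U := by
      rw [Matrix.mul_sub, Matrix.sub_mul]
    rw [h1]
    exact hDDm.conjTranspose_mul_mul_same U
  -- row 0 of B
  have hrow : ∀ q : Fin k, (Uᴴ * Dm * U) ⟨0, hk⟩ q
      = (lam : ℂ) * (1 : Matrix (Fin k) (Fin k) ℂ) ⟨0, hk⟩ q := by
    intro q
    have step : (Uᴴ * Dm * U) ⟨0, hk⟩ q = (lam : ℂ) * (Uᴴ * U) ⟨0, hk⟩ q := by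
      rw [hDm, Matrix.mul_assoc, Matrix.mul_apply, Matrix.mul_apply, Finset.mul_sum]
      refine Finset.sum_congr rfl fun i _ => ?_
      rw [Matrix.diagonal_mul]
      simp only [conjTranspose_apply, hd]
      by_cases hi : (i : ℕ) < m
      · simp only [hi, if_true]; ring
      · rw [hcol i (le_of_not_gt hi)]; simp
    rw [step, hU]
  -- determinant identity
  have he : k - 1 + 1 = k := by omega
  set e : Fin (k - 1 + 1) ≃ Fin k := finCongr he with hedef
  have he0 : e 0 = ⟨0, hk⟩ := rfl
  have hB0 : ∀ j : Fin (k - 1 + 1), ((Uᴴ * Dm * U).submatrix e e) 0 j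
      = if j = 0 then (lam : ℂ) else 0 := by
    intro j
    rw [Matrix.submatrix_apply, he0, hrow (e j), Matrix.one_apply]
    by_cases hj : j = 0
    · subst hj; rw [he0]; simp
    · have : (⟨0, hk⟩ : Fin k) ≠ e j := by
        rw [← he0]; exact fun h => hj (e.injective h).symm
      simp [this, hj]
  have hminor : ((Uᴴ * Dm * U).submatrix e e).submatrix Fin.succ Fin.succ = Vᴴ * Dm * V := by
    ext i j
    rw [Matrix.submatrix_apply, Matrix.submatrix_apply]
    have hi : e i.succ = ⟨(i : ℕ) + 1, by omega⟩ := rfl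
    have hj : e j.succ = ⟨(j : ℕ) + 1, by omega⟩ := rfl
    rw [hDm, Matrix.mul_assoc, Matrix.mul_assoc, Matrix.mul_apply, Matrix.mul_apply]
    refine Finset.sum_congr rfl fun a _ => ?_
    rw [Matrix.diagonal_mul, Matrix.diagonal_mul]
    simp only [conjTranspose_apply, hV, hi, hj]
  have hdetB : (Uᴴ * Dm * U).det = (lam : ℂ) * (Vᴴ * Dm * V).det := by
    rw [← Matrix.det_submatrix_equiv_self e (Uᴴ * Dm * U), Matrix.det_succ_row_zero]
    rw [Fintype.sum_eq_single (0 : Fin (k - 1 + 1)) (fun j hj => by rw [hB0 j, if_neg hj]; ring)]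
    rw [hB0 0, if_pos rfl, Fin.succAbove_zero, hminor]
    simp
  -- conclude
  have hmono := det_re_le_det_re hBpsd hsub
  rw [hdetB] at hmono
  calc lam * ((Vᴴ * Dm * V).det).re = ((lam : ℂ) * (Vᴴ * Dm * V).det).re := by
        simp [Complex.mul_re]
    _ ≤ ((Uᴴ * D * U).det).re := hmono
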